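/- Let R be a commutative ring, A an n×n matrix over R, λ₀ ∈ R, v a right eigenvector and w a left eigenvector of A for λ₀. Then for each j ∈ {1,...,n}, (wᵀv) · det(λ₀ I_{n−1} − M_j) = p_A'(λ₀) · v_j w_j, where M_j is the principal submatrix of A obtained by deleting the j-th row and column. -/

import Mathlib

open Matrix Polynomial

section Aux

variable {R : Type*} [CommRing R]

/-- If `w` is a left null vector of `B`, then within each row of `adjugate B`, the entries
are "proportional" to `w`. -/
lemma adjugate_row_prop {m : Type*} [DecidableEq m] [Fintype m]
    (B : Matrix m m R) (w : m → R) (hw : B.vecMul w = 0) (l j k : m) :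
    w k * B.adjugate l j = w j * B.adjugate l k := by
  rcases eq_or_ne j k with rfl | hjk
  · ring
  set N := B.updateRow j (Pi.single l 1) with hN
  have h0 : ∑ m, w m • B m = 0 := by
    funext c
    have := congrFun hw c
    simpa [Matrix.vecMul, dotProduct] using this
  have hsum : ∑ m, w m • N m = w j • (Pi.single l 1 : m → R) + (-w j) • B j := by
    have hsplitN : ∑ m, w m • N m
        = w j • N j + ∑ m ∈ Finset.univ.erase j, w m • N m :=
      (Finset.add_sum_erase _ _ (Finset.mem_univ j)).symm
    have hsplitB : w j • B j + ∑ m ∈ Finset.univ.erase j, w m • B m = 0 :=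
      (Finset.add_sum_erase _ (fun m => w m • B m) (Finset.mem_univ j)).trans h0
    have hNe : ∀ m ∈ Finset.univ.erase j, w m • N m = w m • B m := by
      intro m hm
      rw [hN, Matrix.updateRow_ne (Finset.ne_of_mem_erase hm)]
    rw [hsplitN, Finset.sum_congr rfl hNe, hN, Matrix.updateRow_self]
    have : ∑ m ∈ Finset.univ.erase j, w m • B m = -(w j • B j) := by
      linear_combination (norm := abel) hsplitB
    rw [this]
    funext c
    simp [neg_smul]
  have key := Matrix.det_updateRow_sum N k (fun m => w m)
  rw [hsum, Matrix.det_updateRow_add, Matrix.det_updateRow_smul,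
    Matrix.det_updateRow_smul] at key
  have h1 : (N.updateRow k (Pi.single l 1)).det = 0 := by
    apply Matrix.det_zero_of_row_eq hjk
    rw [Matrix.updateRow_ne hjk, Matrix.updateRow_self, hN, Matrix.updateRow_self]
  have h2 : (B.updateRow k (Pi.single l 1)).det = -(N.updateRow k (B j)).det := by
    have hperm := Matrix.det_permute (Equiv.swap j k) (N.updateRow k (B j))
    have heq : (N.updateRow k (B j)).submatrix (Equiv.swap j k) id
        = B.updateRow k (Pi.single l 1) := by
      ext i c
      rcases eq_or_ne i j with rfl | hij
      · simp [Equiv.swap_apply_left, Matrix.updateRow_self, Matrix.updateRow_ne hjk]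
      · rcases eq_or_ne i k with rfl | hik
        · simp only [Matrix.submatrix_apply, id, Equiv.swap_apply_right]
          rw [Matrix.updateRow_ne hjk, hN, Matrix.updateRow_self, Matrix.updateRow_self]
        · have hs : Equiv.swap j k i = i := Equiv.swap_apply_of_ne_of_ne hij hik
          simp [hs, Matrix.updateRow_ne hik, Matrix.updateRow_ne hij, hN]
    rw [heq, Equiv.Perm.sign_swap hjk] at hperm
    rw [hperm]
    simp
  rw [Matrix.adjugate_apply, Matrix.adjugate_apply, ← hN]
  rw [h1, mul_zero, zero_add, smul_eq_mul] at key
  rw [h2]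
  linear_combination -key

end Aux

section Eigen

variable {R : Type*} [CommRing R] {n : Type*} [DecidableEq n] [Fintype n]

lemma charmatrix_map_eval (A : Matrix n n R) (lam0 : R) :
    (charmatrix A).map (eval lam0) = lam0 • (1 : Matrix n n R) - A := by
  ext i k
  rcases eq_or_ne i k with rfl | h
  · simp [charmatrix_apply_eq, Matrix.one_apply_eq]
  · simp [charmatrix_apply_ne _ _ _ h, Matrix.one_apply_ne h]

lemma adj_mulVec_eigen (A : Matrix n n R) (lam0 : R) (v : n → R)
    (hAv : A.mulVec v = lam0 • v) :
    (adjugate (lam0 • (1 : Matrix n n R) - A)).mulVec v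
      = ((derivative A.charpoly).eval lam0) • v := by
  set B : Matrix n n R := lam0 • (1 : Matrix n n R) - A with hB
  have hBv : B.mulVec v = 0 := by
    rw [hB, Matrix.sub_mulVec, Matrix.smul_mulVec, Matrix.one_mulVec, hAv, sub_self]
  set p : R[X] := A.charpoly with hp
  set q : R[X] := p /ₘ (X - C lam0) with hq
  have hmono : (X - C lam0).Monic := monic_X_sub_C lam0
  have hdetB : p.eval lam0 = B.det := by
    have h := RingHom.map_det (evalRingHom lam0) (charmatrix A)
    rw [hp, Matrix.charpoly]
    simpa [charmatrix_map_eval A lam0, hB] using h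
  have hpv : ∀ i, p.eval lam0 * v i = 0 := by
    have hz : B.det • v = 0 := by
      calc B.det • v = (B.det • (1 : Matrix n n R)).mulVec v := by
            rw [Matrix.smul_mulVec, Matrix.one_mulVec]
        _ = (adjugate B * B).mulVec v := by rw [Matrix.adjugate_mul]
        _ = (adjugate B).mulVec (B.mulVec v) := (Matrix.mulVec_mulVec v _ _).symm
        _ = 0 := by rw [hBv, Matrix.mulVec_zero]
    intro i
    have := congrFun hz i
    simpa [hdetB] using this
  set v' : n → R[X] := fun i => C (v i) with hv'
  have hcm : (charmatrix A).mulVec v' = (X - C lam0) • v' := by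
    funext i
    rw [charmatrix, Matrix.sub_mulVec]
    have h1 : (Matrix.scalar n (X : R[X])).mulVec v' i = X * C (v i) := by
      rw [Matrix.scalar_apply, Matrix.mulVec_diagonal]
    have h2 : ((C : R →+* R[X]).mapMatrix A).mulVec v' i = C (lam0 * v i) := by
      have hterm : ∀ k, ((C : R →+* R[X]).mapMatrix A) i k * v' k = C (A i k * v k) := by
        intro k
        simp [hv', C_mul]
      have : ((C : R →+* R[X]).mapMatrix A).mulVec v' i = C ((A.mulVec v) i) := by
        simp only [Matrix.mulVec, dotProduct, hterm, ← map_sum]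
      rw [this, hAv]
      simp
    rw [Pi.sub_apply, h1, h2]
    simp only [Pi.smul_apply, smul_eq_mul, hv']
    rw [C_mul]
    ring
  have hu : ∀ i, (X - C lam0) * ((adjugate (charmatrix A)).mulVec v' i)
      = p * C (v i) := by
    intro i
    have h := congrFun (congrArg Matrix.mulVec (Matrix.adjugate_mul (charmatrix A))) v'
    have h2 := congrFun h i
    have hL : ((adjugate (charmatrix A) * charmatrix A).mulVec v') i
        = (X - C lam0) * ((adjugate (charmatrix A)).mulVec v' i) := by
      rw [← Matrix.mulVec_mulVec, hcm, Matrix.mulVec_smul]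
      simp
    have hR : ((Matrix.det (charmatrix A) • (1 : Matrix n n R[X])).mulVec v') i
        = p * C (v i) := by
      rw [Matrix.smul_mulVec, Matrix.one_mulVec]
      simp [hp, Matrix.charpoly, hv']
    rw [hL, hR] at h2
    exact h2
  have hqv : ∀ i, (adjugate (charmatrix A)).mulVec v' i = q * C (v i) := by
    intro i
    apply hmono.isRegular.left
    show (X - C lam0) * ((adjugate (charmatrix A)).mulVec v' i)
      = (X - C lam0) * (q * C (v i))
    rw [hu i]
    conv_lhs => rw [← modByMonic_add_div p (X - C lam0), modByMonic_X_sub_C_eq_C_eval]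
    rw [add_mul, ← C_mul, hpv i, C_0, zero_add, hq]
    ring
  have hqd : q.eval lam0 = (derivative p).eval lam0 := by
    have hrepr : p = (X - C lam0) * q + C (p.eval lam0) := by
      conv_lhs => rw [← modByMonic_add_div p (X - C lam0), modByMonic_X_sub_C_eq_C_eval]
      ring
    conv_rhs => rw [hrepr]
    simp
  funext i
  have h := congrArg (eval lam0) (hqv i)
  have hL : eval lam0 ((adjugate (charmatrix A)).mulVec v' i)
      = (adjugate B).mulVec v i := by
    have hmapadj : (adjugate (charmatrix A)).map (eval lam0) = adjugate B := by
      have := RingHom.map_adjugate (evalRingHom lam0) (charmatrix A)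
      simpa [charmatrix_map_eval A lam0, hB] using this
    rw [← hmapadj]
    simp [Matrix.mulVec, dotProduct, hv', Matrix.map_apply, eval_finset_sum]
  rw [hL] at h
  rw [h]
  simp [hqd]

end Eigen

/-- Eigenvector-eigenvalue identity over a commutative ring: if `v` and `w` are right and
left eigenvectors of `A` for `λ₀`, then for every `j`,
`(wᵀv) · det(λ₀ I_{n−1} − M_j) = p_A'(λ₀) · v_j w_j`, where `M_j` is the principal
submatrix of `A` obtained by deleting the `j`-th row and column. -/
theorem eigenvector_eigenvalue_identity_ring
    {R : Type*} [CommRing R] {n : ℕ} (A : Matrix (Fin (n + 1)) (Fin (n + 1)) R)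
    (lam0 : R) (v w : Fin (n + 1) → R) (hv : v ≠ 0) (hw : w ≠ 0)
    (hAv : A.mulVec v = lam0 • v) (hwA : A.vecMul w = lam0 • w) :
    ∀ j : Fin (n + 1),
      (w ⬝ᵥ v) *
          (lam0 • (1 : Matrix (Fin n) (Fin n) R) -
            A.submatrix j.succAbove j.succAbove).det =
        (Polynomial.derivative A.charpoly).eval lam0 * (v j * w j) := by
  intro j
  set B : Matrix (Fin (n + 1)) (Fin (n + 1)) R := lam0 • (1 : Matrix _ _ R) - A with hB
  have hBw : B.vecMul w = 0 := by
    rw [← Matrix.mulVec_transpose, hB, Matrix.transpose_sub, Matrix.transpose_smul,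
      Matrix.transpose_one, Matrix.sub_mulVec, Matrix.smul_mulVec, Matrix.one_mulVec,
      Matrix.mulVec_transpose, hwA, sub_self]
  have hdet : (lam0 • (1 : Matrix (Fin n) (Fin n) R) -
      A.submatrix j.succAbove j.succAbove).det = adjugate B j j := by
    rw [Matrix.adjugate_fin_succ_eq_det_submatrix]
    have hsub : B.submatrix j.succAbove j.succAbove
        = lam0 • (1 : Matrix (Fin n) (Fin n) R) - A.submatrix j.succAbove j.succAbove := by
      rw [hB]
      ext i k
      simp [Matrix.submatrix_apply, Matrix.one_apply, Fin.succAbove_right_injective.eq_iff]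
    rw [hsub]
    have : ((-1 : R)) ^ (j + j : ℕ) = 1 := Even.neg_one_pow ⟨j, rfl⟩
    rw [this, one_mul]
  have hmv := adj_mulVec_eigen A lam0 v hAv
  rw [← hB] at hmv
  have hrow : ∀ k, w k * adjugate B j j = w j * adjugate B j k := fun k =>
    adjugate_row_prop B w hBw j j k
  rw [hdet]
  calc (w ⬝ᵥ v) * adjugate B j j = ∑ k, v k * (w k * adjugate B j j) := by
        rw [dotProduct, Finset.sum_mul]
        exact Finset.sum_congr rfl fun k _ => by ring
    _ = ∑ k, v k * (w j * adjugate B j k) := Finset.sum_congr rfl fun k _ => by rw [hrow k]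
    _ = w j * ((adjugate B).mulVec v j) := by
        rw [Matrix.mulVec, dotProduct, Finset.mul_sum]
        exact Finset.sum_congr rfl fun k _ => by ring
    _ = (Polynomial.derivative A.charpoly).eval lam0 * (v j * w j) := by
        rw [hmv]
        simp only [Pi.smul_apply, smul_eq_mul]
        ring
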